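/- In the key case of the tripod comparison: suppose A lies on the leg γ at arc-length distance t from the center o, B lies on leg β at arc-length distance s from o, each leg is an ε-geodesic, o is an ε-nearest point of the ε-geodesic α ∪ β to the endpoint of γ, and t ≥ (t+s)/3. Then t + s ≤ 3 d(τ(A), τ(B)) + 6ε. -/
import Mathlib


/-- Key case of the tripod comparison.  `A` lies on the leg `γ` (an
`ε`-geodesic from `z` to the center `o`) at arc-length distance `t` from `o`,
`B` lies on the leg `β` at arc-length distance `s` from `o`, `o` is an
`ε`-nearest point of the `ε`-geodesic `α ∪ β` to `z` (in particular
`d(z,o) ≤ d(z,B) + ε`), and `t ≥ (t+s)/3`.  Then `t + s ≤ 3 d(A,B) + 6ε`. -/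
theorem tripod_comparison_key_case (X : Type*) [MetricSpace X]
    (ε s t : ℝ) (hε : 0 ≤ ε) (hs : 0 ≤ s) (ht : 0 ≤ t)
    (z o A B : X)
    -- `A` at arc-length distance `t` from `o` on the `ε`-geodesic `γ` from `z` to `o`:
    (hAo₁ : dist A o ≤ t) (hAo₂ : t ≤ dist A o + ε)
    (hgeod : dist z A + dist A o ≤ dist z o + ε)
    -- `B` at arc-length distance `s` from `o` along the `ε`-geodesic leg `β`:
    (hBo₁ : dist o B ≤ s) (hBo₂ : s ≤ dist o B + ε)
    -- `o` is an `ε`-nearest point of `α ∪ β` to `z`; `B` lies on `α ∪ β`: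
    (hnear : dist z o ≤ dist z B + ε)
    (hcase : (t + s) / 3 ≤ t) :
    t + s ≤ 3 * dist A B + 6 * ε := by
  have h1 := dist_triangle z A B
  have h2 := dist_triangle o A B
  have h3 := dist_comm A o
  linarith
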